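/- Let q = q₁q₂ with gcd(q₁,q₂) = 1, let b ∈ ℤ⁴, and for j = 1,2,3 let χ_{j,1} be a Dirichlet character modulo q₁ and χ_{j,2} a Dirichlet character modulo q₂, and let χ_j denote the Dirichlet character modulo q obtained as the product of χ_{j,1} and χ_{j,2}. Then B(q, b; χ₁, χ₂, χ₃) = B(q₁, b; χ_{1,1}, χ_{2,1}, χ_{3,1}) · B(q₂, b; χ_{1,2}, χ_{2,2}, χ_{3,2}). -/

import Mathlib

/-- `S(χ,a) = ∑_{h=1}^{q} conj(χ)(h) e_q(a h²)` for a Dirichlet character χ mod q. -/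
noncomputable def Schar {q : ℕ} (χ : DirichletCharacter ℂ q) (a : ℤ) : ℂ :=
  ∑ h ∈ Finset.Icc 1 q,
    (starRingEnd ℂ) (χ (h : ZMod q)) *
      Complex.exp (2 * (Real.pi : ℂ) * Complex.I * ((a : ℂ) * (h : ℂ) ^ 2) / (q : ℂ))

/-- `B(q, (b₁,b₂,b₃,b₄); χ₁, χ₂, χ₃)
  = φ(q)⁻³ ∑_{1 ≤ a ≤ q, gcd(a,q)=1} S(χ₁,ab₁) S(χ₂,ab₂) S(χ₃,ab₃) e_q(−ab₄)`. -/
noncomputable def Bsum (q : ℕ) (b₁ b₂ b₃ b₄ : ℤ) (χ₁ χ₂ χ₃ : DirichletCharacter ℂ q) : ℂ :=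
  ((q.totient : ℂ))⁻¹ ^ 3 *
    ∑ a ∈ (Finset.Icc 1 q).filter (fun a => Nat.gcd a q = 1),
      Schar χ₁ ((a : ℤ) * b₁) * Schar χ₂ ((a : ℤ) * b₂) * Schar χ₃ ((a : ℤ) * b₃) *
        Complex.exp (-(2 * (Real.pi : ℂ) * Complex.I * ((a : ℂ) * (b₄ : ℂ)) / (q : ℂ)))

/-- Auxiliary Gauss-type sum at the level of `ZMod q`. -/
noncomputable def Tsum (q : ℕ) [NeZero q] (χ : DirichletCharacter ℂ q) (v : ZMod q) : ℂ :=
  ∑ x : ZMod q, (starRingEnd ℂ) (χ x) * ZMod.stdAddChar (v * x ^ 2)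

/-- Auxiliary B-sum at the level of `ZMod q`. -/
noncomputable def Baux (q : ℕ) [NeZero q] (b₁ b₂ b₃ b₄ : ℤ)
    (χ₁ χ₂ χ₃ : DirichletCharacter ℂ q) : ℂ :=
  ∑ u : (ZMod q)ˣ,
    Tsum q χ₁ ((u : ZMod q) * (b₁ : ZMod q)) * Tsum q χ₂ ((u : ZMod q) * (b₂ : ZMod q)) *
      Tsum q χ₃ ((u : ZMod q) * (b₃ : ZMod q)) *
        ZMod.stdAddChar (-((u : ZMod q) * (b₄ : ZMod q)))

lemma sum_Icc_cast_zmod (q : ℕ) [NeZero q] (f : ZMod q → ℂ) :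
    ∑ h ∈ Finset.Icc 1 q, f (h : ZMod q) = ∑ x : ZMod q, f x := by
  have hq : 0 < q := Nat.pos_of_ne_zero (NeZero.ne q)
  refine Finset.sum_nbij' (i := fun h => (h : ZMod q))
    (j := fun x => if x = 0 then q else x.val) (fun a _ => Finset.mem_univ _) ?_ ?_ ?_ ?_
  · intro x _
    by_cases hx : x = 0
    · simp only [hx, if_true, Finset.mem_Icc]
      omega
    · simp only [hx, if_false, Finset.mem_Icc]
      refine ⟨Nat.one_le_iff_ne_zero.2 (fun h => hx ((ZMod.val_eq_zero x).1 h)),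
        (ZMod.val_lt x).le⟩
  · intro a ha
    rw [Finset.mem_Icc] at ha
    by_cases h0 : (a : ZMod q) = 0
    · simp only [h0, if_true]
      have hdvd : q ∣ a := (ZMod.natCast_eq_zero_iff a q).1 h0
      exact (Nat.le_antisymm ha.2 (Nat.le_of_dvd (lt_of_lt_of_le Nat.zero_lt_one ha.1) hdvd)).symm
    · simp only [h0, if_false, ZMod.val_natCast]
      have hlt : a < q := lt_of_le_of_ne ha.2 (fun h => h0 (by rw [h]; exact ZMod.natCast_self q))
      exact Nat.mod_eq_of_lt hlt
  · intro x _
    by_cases hx : x = 0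
    · simp [hx]
    · simp [hx, ZMod.natCast_zmod_val]
  · intro a _; rfl

lemma sum_units_zmod (q : ℕ) [NeZero q] (f : ZMod q → ℂ) :
    ∑ a ∈ (Finset.Icc 1 q).filter (fun a => Nat.gcd a q = 1), f (a : ZMod q)
      = ∑ u : (ZMod q)ˣ, f (u : ZMod q) := by
  rw [Finset.sum_filter]
  have h1 : ∀ a ∈ Finset.Icc 1 q,
      (if Nat.gcd a q = 1 then f (a : ZMod q) else 0)
        = (fun x : ZMod q => if IsUnit x then f x else 0) ((a : ℕ) : ZMod q) := by
    intro a _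
    show _ = if IsUnit ((a : ℕ) : ZMod q) then f ((a : ℕ) : ZMod q) else 0
    by_cases h : Nat.gcd a q = 1
    · rw [if_pos h, if_pos ((ZMod.isUnit_iff_coprime a q).2 h)]
    · rw [if_neg h, if_neg (fun hu => h ((ZMod.isUnit_iff_coprime a q).1 hu))]
  rw [Finset.sum_congr rfl h1, sum_Icc_cast_zmod q (fun x => if IsUnit x then f x else 0),
    ← Finset.sum_filter]
  have h2 : Finset.univ.filter (fun x : ZMod q => IsUnit x)
      = Finset.univ.image (fun u : (ZMod q)ˣ => (u : ZMod q)) := by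
    ext x
    simp only [Finset.mem_filter, Finset.mem_univ, true_and, Finset.mem_image]
    exact Iff.rfl
  rw [h2, Finset.sum_image (fun u _ v _ h => Units.ext h)]

lemma Schar_eq (q : ℕ) [NeZero q] (χ : DirichletCharacter ℂ q) (a : ℤ) :
    Schar χ a = Tsum q χ ((a : ZMod q)) := by
  rw [Schar, Tsum,
    ← sum_Icc_cast_zmod q (fun x => (starRingEnd ℂ) (χ x) * ZMod.stdAddChar ((a : ZMod q) * x ^ 2))]
  refine Finset.sum_congr rfl fun h _ => ?_
  congr 1
  have h1 : (a : ZMod q) * ((h : ZMod q)) ^ 2 = ((a * (h : ℤ) ^ 2 : ℤ) : ZMod q) := by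
    push_cast; ring
  rw [h1, ZMod.stdAddChar_coe]
  congr 1
  push_cast
  ring

lemma Bsum_eq (q : ℕ) [NeZero q] (b₁ b₂ b₃ b₄ : ℤ) (χ₁ χ₂ χ₃ : DirichletCharacter ℂ q) :
    Bsum q b₁ b₂ b₃ b₄ χ₁ χ₂ χ₃ = ((q.totient : ℂ))⁻¹ ^ 3 * Baux q b₁ b₂ b₃ b₄ χ₁ χ₂ χ₃ := by
  rw [Bsum, Baux]
  congr 1
  rw [← sum_units_zmod q (fun v => Tsum q χ₁ (v * (b₁ : ZMod q)) * Tsum q χ₂ (v * (b₂ : ZMod q)) *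
    Tsum q χ₃ (v * (b₃ : ZMod q)) * ZMod.stdAddChar (-(v * (b₄ : ZMod q))))]
  refine Finset.sum_congr rfl fun a _ => ?_
  have e₁ : ∀ (χ : DirichletCharacter ℂ q) (b : ℤ),
      Schar χ ((a : ℤ) * b) = Tsum q χ ((a : ZMod q) * (b : ZMod q)) := by
    intro χ b
    rw [Schar_eq]
    congr 1
    push_cast
    ring
  have h4 : Complex.exp (-(2 * (Real.pi : ℂ) * Complex.I * ((a : ℂ) * (b₄ : ℂ)) / (q : ℂ)))
      = ZMod.stdAddChar (-((a : ZMod q) * (b₄ : ZMod q))) := by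
    have h5 : -((a : ZMod q) * (b₄ : ZMod q)) = (((-((a : ℤ) * b₄) : ℤ)) : ZMod q) := by
      push_cast; ring
    rw [h5, ZMod.stdAddChar_coe]
    congr 1
    push_cast
    ring
  rw [e₁, e₁, e₁, h4]

set_option maxHeartbeats 2000000 in
lemma Baux_mul (q₁ q₂ : ℕ) [NeZero q₁] [NeZero q₂] (hco : Nat.Coprime q₁ q₂)
    (b₁ b₂ b₃ b₄ : ℤ)
    (χ₁₁ χ₂₁ χ₃₁ : DirichletCharacter ℂ q₁) (χ₁₂ χ₂₂ χ₃₂ : DirichletCharacter ℂ q₂) :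
    haveI : NeZero (q₁ * q₂) := ⟨mul_ne_zero (NeZero.ne q₁) (NeZero.ne q₂)⟩
    Baux (q₁ * q₂) b₁ b₂ b₃ b₄
      (DirichletCharacter.changeLevel (dvd_mul_right q₁ q₂) χ₁₁ *
        DirichletCharacter.changeLevel (dvd_mul_left q₂ q₁) χ₁₂)
      (DirichletCharacter.changeLevel (dvd_mul_right q₁ q₂) χ₂₁ *
        DirichletCharacter.changeLevel (dvd_mul_left q₂ q₁) χ₂₂)
      (DirichletCharacter.changeLevel (dvd_mul_right q₁ q₂) χ₃₁ *
        DirichletCharacter.changeLevel (dvd_mul_left q₂ q₁) χ₃₂)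
      = Baux q₁ b₁ b₂ b₃ b₄ χ₁₁ χ₂₁ χ₃₁ * Baux q₂ b₁ b₂ b₃ b₄ χ₁₂ χ₂₂ χ₃₂ := by
  haveI : NeZero (q₁ * q₂) := ⟨mul_ne_zero (NeZero.ne q₁) (NeZero.ne q₂)⟩
  obtain ⟨c₁, c₂, hBez⟩ := Nat.isCoprime_iff_coprime.mpr hco.symm
  set crt := ZMod.chineseRemainder hco with hcrt
  -- basic facts about crt
  have crt_nat : ∀ m : ℕ, crt ((m : ZMod (q₁ * q₂))) = ((m : ZMod q₁), (m : ZMod q₂)) := by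
    intro m
    rw [map_natCast (crt : ZMod (q₁ * q₂) ≃+* ZMod q₁ × ZMod q₂) m]
    exact Prod.ext (Prod.fst_natCast m) (Prod.snd_natCast m)
  have crt_int : ∀ m : ℤ, crt ((m : ZMod (q₁ * q₂))) = ((m : ZMod q₁), (m : ZMod q₂)) := by
    intro m
    rw [map_intCast (crt : ZMod (q₁ * q₂) ≃+* ZMod q₁ × ZMod q₂) m]
    exact Prod.ext (Prod.fst_intCast m) (Prod.snd_intCast m)
  have crt_fst : ∀ x : ZMod (q₁ * q₂), (crt x).1 = (ZMod.cast x : ZMod q₁) := by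
    intro x
    conv_lhs => rw [← ZMod.natCast_zmod_val x]
    rw [crt_nat]
    exact ZMod.natCast_val x
  have crt_snd : ∀ x : ZMod (q₁ * q₂), (crt x).2 = (ZMod.cast x : ZMod q₂) := by
    intro x
    conv_lhs => rw [← ZMod.natCast_zmod_val x]
    rw [crt_nat]
    exact ZMod.natCast_val x
  -- units transfer
  have unit_of_parts : ∀ x : ZMod (q₁ * q₂), IsUnit (crt x).1 → IsUnit (crt x).2 → IsUnit x := by
    intro x h1 h2
    have hu : IsUnit (crt x) := by
      obtain ⟨v₁, hv₁⟩ := h1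
      obtain ⟨v₂, hv₂⟩ := h2
      refine IsUnit.of_mul_eq_one ((v₁⁻¹ : (ZMod q₁)ˣ), (v₂⁻¹ : (ZMod q₂)ˣ)) ?_
      have h3 : crt x = ((crt x).1, (crt x).2) := rfl
      rw [h3, ← hv₁, ← hv₂, Prod.mk_mul_mk]
      simp
    have h3 : x = crt.symm (crt x) := (crt.symm_apply_apply x).symm
    rw [h3]
    exact hu.map (crt.symm : ZMod q₁ × ZMod q₂ →+* ZMod (q₁ * q₂))
  -- character splitting
  have char_split : ∀ (χ' : DirichletCharacter ℂ q₁) (χ'' : DirichletCharacter ℂ q₂)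
      (x : ZMod (q₁ * q₂)),
      (DirichletCharacter.changeLevel (dvd_mul_right q₁ q₂) χ' *
        DirichletCharacter.changeLevel (dvd_mul_left q₂ q₁) χ'') x
        = χ' (crt x).1 * χ'' (crt x).2 := by
    intro χ' χ'' x
    rw [MulChar.mul_apply]
    by_cases hx : IsUnit x
    · obtain ⟨u, rfl⟩ := hx
      rw [DirichletCharacter.changeLevel_eq_cast_of_dvd χ' (dvd_mul_right q₁ q₂) u,
        DirichletCharacter.changeLevel_eq_cast_of_dvd χ'' (dvd_mul_left q₂ q₁) u,
        crt_fst, crt_snd]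
    · rw [MulChar.map_nonunit (DirichletCharacter.changeLevel (dvd_mul_right q₁ q₂) χ') hx,
        zero_mul]
      symm
      by_cases h1 : IsUnit (crt x).1
      · have h2 : ¬ IsUnit (crt x).2 := fun h2 => hx (unit_of_parts x h1 h2)
        rw [MulChar.map_nonunit χ'' h2, mul_zero]
      · rw [MulChar.map_nonunit χ' h1, zero_mul]
  -- additive character splitting
  have psi_split : ∀ m : ℤ, (ZMod.stdAddChar ((m : ZMod (q₁ * q₂))) : ℂ)
      = ZMod.stdAddChar (((c₁ * m : ℤ) : ZMod q₁)) *
          ZMod.stdAddChar (((c₂ * m : ℤ) : ZMod q₂)) := by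
    intro m
    rw [ZMod.stdAddChar_coe, ZMod.stdAddChar_coe, ZMod.stdAddChar_coe, ← Complex.exp_add]
    congr 1
    have h1 : (q₁ : ℂ) ≠ 0 := Nat.cast_ne_zero.2 (NeZero.ne q₁)
    have h2 : (q₂ : ℂ) ≠ 0 := Nat.cast_ne_zero.2 (NeZero.ne q₂)
    have hB : (c₁ : ℂ) * (q₂ : ℂ) + (c₂ : ℂ) * (q₁ : ℂ) = 1 := by
      have := congrArg (fun z : ℤ => (z : ℂ)) hBez
      push_cast at this
      simpa using this
    push_cast
    field_simp
    ring_nf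
    linear_combination (-(m : ℂ)) * hB
  have psi_split' : ∀ x : ZMod (q₁ * q₂), (ZMod.stdAddChar x : ℂ)
      = ZMod.stdAddChar ((c₁ : ZMod q₁) * (crt x).1) *
          ZMod.stdAddChar ((c₂ : ZMod q₂) * (crt x).2) := by
    intro x
    have hx : x = ((x.val : ℤ) : ZMod (q₁ * q₂)) := by
      push_cast
      exact (ZMod.natCast_zmod_val x).symm
    rw [hx, psi_split, crt_int]
    congr 2
    · push_cast; ring
    · push_cast; ring
  -- Tsum splitting
  have Tsum_split : ∀ (χ' : DirichletCharacter ℂ q₁) (χ'' : DirichletCharacter ℂ q₂)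
      (v : ZMod (q₁ * q₂)),
      Tsum (q₁ * q₂) (DirichletCharacter.changeLevel (dvd_mul_right q₁ q₂) χ' *
        DirichletCharacter.changeLevel (dvd_mul_left q₂ q₁) χ'') v
        = Tsum q₁ χ' ((c₁ : ZMod q₁) * (crt v).1) *
            Tsum q₂ χ'' ((c₂ : ZMod q₂) * (crt v).2) := by
    intro χ' χ'' v
    have hG : ∀ x : ZMod (q₁ * q₂),
        (starRingEnd ℂ) ((DirichletCharacter.changeLevel (dvd_mul_right q₁ q₂) χ' *
          DirichletCharacter.changeLevel (dvd_mul_left q₂ q₁) χ'') x) *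
            ZMod.stdAddChar (v * x ^ 2)
          = ((starRingEnd ℂ) (χ' (crt x).1) *
              ZMod.stdAddChar (((c₁ : ZMod q₁) * (crt v).1) * ((crt x).1) ^ 2)) *
            ((starRingEnd ℂ) (χ'' (crt x).2) *
              ZMod.stdAddChar (((c₂ : ZMod q₂) * (crt v).2) * ((crt x).2) ^ 2)) := by
      intro x
      rw [char_split, map_mul, psi_split' (v * x ^ 2), map_mul crt v (x ^ 2), map_pow crt x 2]
      have e1 : (c₁ : ZMod q₁) * (crt v * crt x ^ 2).1
          = ((c₁ : ZMod q₁) * (crt v).1) * ((crt x).1) ^ 2 := by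
        show (c₁ : ZMod q₁) * ((crt v).1 * ((crt x ^ 2).1)) = _
        have : (crt x ^ 2).1 = ((crt x).1) ^ 2 := rfl
        rw [this]; ring
      have e2 : (c₂ : ZMod q₂) * (crt v * crt x ^ 2).2
          = ((c₂ : ZMod q₂) * (crt v).2) * ((crt x).2) ^ 2 := by
        show (c₂ : ZMod q₂) * ((crt v).2 * ((crt x ^ 2).2)) = _
        have : (crt x ^ 2).2 = ((crt x).2) ^ 2 := rfl
        rw [this]; ring
      rw [e1, e2]
      ring
    rw [Tsum, Finset.sum_congr rfl (fun x _ => hG x)]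
    have hre2 : Tsum q₁ χ' ((c₁ : ZMod q₁) * (crt v).1) * Tsum q₂ χ'' ((c₂ : ZMod q₂) * (crt v).2)
        = ∑ p : ZMod q₁ × ZMod q₂,
        ((starRingEnd ℂ) (χ' p.1) *
          ZMod.stdAddChar (((c₁ : ZMod q₁) * (crt v).1) * (p.1) ^ 2)) *
        ((starRingEnd ℂ) (χ'' p.2) *
          ZMod.stdAddChar (((c₂ : ZMod q₂) * (crt v).2) * (p.2) ^ 2)) := by
      rw [Tsum, Tsum, Finset.sum_mul_sum]
      exact (Fintype.sum_prod_type (f := (fun p : ZMod q₁ × ZMod q₂ =>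
        ((starRingEnd ℂ) (χ' p.1) *
          ZMod.stdAddChar (((c₁ : ZMod q₁) * (crt v).1) * (p.1) ^ 2)) *
        ((starRingEnd ℂ) (χ'' p.2) *
          ZMod.stdAddChar (((c₂ : ZMod q₂) * (crt v).2) * (p.2) ^ 2))))).symm
    rw [hre2]
    exact Equiv.sum_comp crt.toEquiv (g := (fun p : ZMod q₁ × ZMod q₂ =>
        ((starRingEnd ℂ) (χ' p.1) *
          ZMod.stdAddChar (((c₁ : ZMod q₁) * (crt v).1) * (p.1) ^ 2)) *
        ((starRingEnd ℂ) (χ'' p.2) *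
          ZMod.stdAddChar (((c₂ : ZMod q₂) * (crt v).2) * (p.2) ^ 2))))
    -- specialized splitting with units
  have Tsplit' : ∀ (χ' : DirichletCharacter ℂ q₁) (χ'' : DirichletCharacter ℂ q₂)
      (u : (ZMod (q₁ * q₂))ˣ) (b : ℤ),
      Tsum (q₁ * q₂) (DirichletCharacter.changeLevel (dvd_mul_right q₁ q₂) χ' *
        DirichletCharacter.changeLevel (dvd_mul_left q₂ q₁) χ'')
        ((u : ZMod (q₁ * q₂)) * (b : ZMod (q₁ * q₂)))
        = Tsum q₁ χ' (((c₁ : ZMod q₁) * (crt (u : ZMod (q₁ * q₂))).1) * (b : ZMod q₁)) *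
            Tsum q₂ χ'' (((c₂ : ZMod q₂) * (crt (u : ZMod (q₁ * q₂))).2) * (b : ZMod q₂)) := by
    intro χ' χ'' u b
    rw [Tsum_split]
    have e1 : (c₁ : ZMod q₁) * (crt ((u : ZMod (q₁ * q₂)) * (b : ZMod (q₁ * q₂)))).1
        = ((c₁ : ZMod q₁) * (crt (u : ZMod (q₁ * q₂))).1) * (b : ZMod q₁) := by
      rw [map_mul, crt_int b]
      show (c₁ : ZMod q₁) * ((crt ((u : ZMod (q₁ * q₂)))).1 * (b : ZMod q₁)) = _
      ring
    have e2 : (c₂ : ZMod q₂) * (crt ((u : ZMod (q₁ * q₂)) * (b : ZMod (q₁ * q₂)))).2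
        = ((c₂ : ZMod q₂) * (crt (u : ZMod (q₁ * q₂))).2) * (b : ZMod q₂) := by
      rw [map_mul, crt_int b]
      show (c₂ : ZMod q₂) * ((crt ((u : ZMod (q₁ * q₂)))).2 * (b : ZMod q₂)) = _
      ring
    rw [e1, e2]
  have psi4 : ∀ u : (ZMod (q₁ * q₂))ˣ,
      (ZMod.stdAddChar (-((u : ZMod (q₁ * q₂)) * (b₄ : ZMod (q₁ * q₂)))) : ℂ)
        = ZMod.stdAddChar (-(((c₁ : ZMod q₁) * (crt (u : ZMod (q₁ * q₂))).1) * (b₄ : ZMod q₁))) *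
          ZMod.stdAddChar (-(((c₂ : ZMod q₂) * (crt (u : ZMod (q₁ * q₂))).2) * (b₄ : ZMod q₂))) := by
    intro u
    rw [psi_split']
    have e1 : (c₁ : ZMod q₁) * (crt (-((u : ZMod (q₁ * q₂)) * (b₄ : ZMod (q₁ * q₂))))).1
        = -(((c₁ : ZMod q₁) * (crt (u : ZMod (q₁ * q₂))).1) * (b₄ : ZMod q₁)) := by
      rw [map_neg, map_mul, crt_int b₄]
      show (c₁ : ZMod q₁) * (-((crt ((u : ZMod (q₁ * q₂)))).1 * (b₄ : ZMod q₁))) = _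
      ring
    have e2 : (c₂ : ZMod q₂) * (crt (-((u : ZMod (q₁ * q₂)) * (b₄ : ZMod (q₁ * q₂))))).2
        = -(((c₂ : ZMod q₂) * (crt (u : ZMod (q₁ * q₂))).2) * (b₄ : ZMod q₂)) := by
      rw [map_neg, map_mul, crt_int b₄]
      show (c₂ : ZMod q₂) * (-((crt ((u : ZMod (q₁ * q₂)))).2 * (b₄ : ZMod q₂))) = _
      ring
    rw [e1, e2]
  -- units equivalence
  set ue : (ZMod (q₁ * q₂))ˣ ≃* (ZMod q₁)ˣ × (ZMod q₂)ˣ :=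
    (Units.mapEquiv (crt : ZMod (q₁ * q₂) ≃+* ZMod q₁ × ZMod q₂).toMulEquiv).trans
      MulEquiv.prodUnits with hue
  have ue_fst : ∀ u : (ZMod (q₁ * q₂))ˣ,
      (((ue u).1 : (ZMod q₁)ˣ) : ZMod q₁) = (crt (u : ZMod (q₁ * q₂))).1 := fun u => rfl
  have ue_snd : ∀ u : (ZMod (q₁ * q₂))ˣ,
      (((ue u).2 : (ZMod q₂)ˣ) : ZMod q₂) = (crt (u : ZMod (q₁ * q₂))).2 := fun u => rfl
  -- c₁, c₂ are units
  have hc₁ : (c₁ : ZMod q₁) * ((q₂ : ℕ) : ZMod q₁) = 1 := by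
    have h := congrArg (fun z : ℤ => (z : ZMod q₁)) hBez
    push_cast at h
    simpa [ZMod.natCast_self] using h
  have hc₂ : (c₂ : ZMod q₂) * ((q₁ : ℕ) : ZMod q₂) = 1 := by
    have h := congrArg (fun z : ℤ => (z : ZMod q₂)) hBez
    push_cast at h
    simpa [ZMod.natCast_self] using h
  set e₁ : (ZMod q₁)ˣ := (IsUnit.of_mul_eq_one _ hc₁).unit with he₁def
  set e₂ : (ZMod q₂)ˣ := (IsUnit.of_mul_eq_one _ hc₂).unit with he₂def
  have he₁ : (e₁ : ZMod q₁) = (c₁ : ZMod q₁) := IsUnit.unit_spec _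
  have he₂ : (e₂ : ZMod q₂) = (c₂ : ZMod q₂) := IsUnit.unit_spec _
  -- termwise identity
  have key : ∀ u : (ZMod (q₁ * q₂))ˣ,
      Tsum (q₁ * q₂) (DirichletCharacter.changeLevel (dvd_mul_right q₁ q₂) χ₁₁ *
          DirichletCharacter.changeLevel (dvd_mul_left q₂ q₁) χ₁₂)
          ((u : ZMod (q₁ * q₂)) * (b₁ : ZMod (q₁ * q₂))) *
        Tsum (q₁ * q₂) (DirichletCharacter.changeLevel (dvd_mul_right q₁ q₂) χ₂₁ *
          DirichletCharacter.changeLevel (dvd_mul_left q₂ q₁) χ₂₂)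
          ((u : ZMod (q₁ * q₂)) * (b₂ : ZMod (q₁ * q₂))) *
        Tsum (q₁ * q₂) (DirichletCharacter.changeLevel (dvd_mul_right q₁ q₂) χ₃₁ *
          DirichletCharacter.changeLevel (dvd_mul_left q₂ q₁) χ₃₂)
          ((u : ZMod (q₁ * q₂)) * (b₃ : ZMod (q₁ * q₂))) *
        ZMod.stdAddChar (-((u : ZMod (q₁ * q₂)) * (b₄ : ZMod (q₁ * q₂))))
      = (Tsum q₁ χ₁₁ (((e₁ * (ue u).1 : (ZMod q₁)ˣ) : ZMod q₁) * (b₁ : ZMod q₁)) *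
          Tsum q₁ χ₂₁ (((e₁ * (ue u).1 : (ZMod q₁)ˣ) : ZMod q₁) * (b₂ : ZMod q₁)) *
          Tsum q₁ χ₃₁ (((e₁ * (ue u).1 : (ZMod q₁)ˣ) : ZMod q₁) * (b₃ : ZMod q₁)) *
          ZMod.stdAddChar (-(((e₁ * (ue u).1 : (ZMod q₁)ˣ) : ZMod q₁) * (b₄ : ZMod q₁)))) *
        (Tsum q₂ χ₁₂ (((e₂ * (ue u).2 : (ZMod q₂)ˣ) : ZMod q₂) * (b₁ : ZMod q₂)) *
          Tsum q₂ χ₂₂ (((e₂ * (ue u).2 : (ZMod q₂)ˣ) : ZMod q₂) * (b₂ : ZMod q₂)) *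
          Tsum q₂ χ₃₂ (((e₂ * (ue u).2 : (ZMod q₂)ˣ) : ZMod q₂) * (b₃ : ZMod q₂)) *
          ZMod.stdAddChar (-(((e₂ * (ue u).2 : (ZMod q₂)ˣ) : ZMod q₂) * (b₄ : ZMod q₂)))) := by
    intro u
    have harg1 : ((e₁ * (ue u).1 : (ZMod q₁)ˣ) : ZMod q₁)
        = (c₁ : ZMod q₁) * (crt (u : ZMod (q₁ * q₂))).1 := by
      rw [Units.val_mul, he₁, ue_fst]
    have harg2 : ((e₂ * (ue u).2 : (ZMod q₂)ˣ) : ZMod q₂)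
        = (c₂ : ZMod q₂) * (crt (u : ZMod (q₁ * q₂))).2 := by
      rw [Units.val_mul, he₂, ue_snd]
    rw [harg1, harg2, Tsplit', Tsplit', Tsplit', psi4]
    ring
  -- assemble
  rw [Baux, Baux, Baux, Finset.sum_congr rfl (fun u _ => key u)]
  have step1 : ∑ u : (ZMod (q₁ * q₂))ˣ,
      (Tsum q₁ χ₁₁ (((e₁ * (ue u).1 : (ZMod q₁)ˣ) : ZMod q₁) * (b₁ : ZMod q₁)) *
        Tsum q₁ χ₂₁ (((e₁ * (ue u).1 : (ZMod q₁)ˣ) : ZMod q₁) * (b₂ : ZMod q₁)) *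
        Tsum q₁ χ₃₁ (((e₁ * (ue u).1 : (ZMod q₁)ˣ) : ZMod q₁) * (b₃ : ZMod q₁)) *
        ZMod.stdAddChar (-(((e₁ * (ue u).1 : (ZMod q₁)ˣ) : ZMod q₁) * (b₄ : ZMod q₁)))) *
      (Tsum q₂ χ₁₂ (((e₂ * (ue u).2 : (ZMod q₂)ˣ) : ZMod q₂) * (b₁ : ZMod q₂)) *
        Tsum q₂ χ₂₂ (((e₂ * (ue u).2 : (ZMod q₂)ˣ) : ZMod q₂) * (b₂ : ZMod q₂)) *
        Tsum q₂ χ₃₂ (((e₂ * (ue u).2 : (ZMod q₂)ˣ) : ZMod q₂) * (b₃ : ZMod q₂)) *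
        ZMod.stdAddChar (-(((e₂ * (ue u).2 : (ZMod q₂)ˣ) : ZMod q₂) * (b₄ : ZMod q₂))))
      = ∑ p : (ZMod q₁)ˣ × (ZMod q₂)ˣ,
      (Tsum q₁ χ₁₁ (((e₁ * p.1 : (ZMod q₁)ˣ) : ZMod q₁) * (b₁ : ZMod q₁)) *
        Tsum q₁ χ₂₁ (((e₁ * p.1 : (ZMod q₁)ˣ) : ZMod q₁) * (b₂ : ZMod q₁)) *
        Tsum q₁ χ₃₁ (((e₁ * p.1 : (ZMod q₁)ˣ) : ZMod q₁) * (b₃ : ZMod q₁)) *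
        ZMod.stdAddChar (-(((e₁ * p.1 : (ZMod q₁)ˣ) : ZMod q₁) * (b₄ : ZMod q₁)))) *
      (Tsum q₂ χ₁₂ (((e₂ * p.2 : (ZMod q₂)ˣ) : ZMod q₂) * (b₁ : ZMod q₂)) *
        Tsum q₂ χ₂₂ (((e₂ * p.2 : (ZMod q₂)ˣ) : ZMod q₂) * (b₂ : ZMod q₂)) *
        Tsum q₂ χ₃₂ (((e₂ * p.2 : (ZMod q₂)ˣ) : ZMod q₂) * (b₃ : ZMod q₂)) *
        ZMod.stdAddChar (-(((e₂ * p.2 : (ZMod q₂)ˣ) : ZMod q₂) * (b₄ : ZMod q₂)))) := by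
    exact Equiv.sum_comp ue.toEquiv (g := fun p : (ZMod q₁)ˣ × (ZMod q₂)ˣ =>
      (Tsum q₁ χ₁₁ (((e₁ * p.1 : (ZMod q₁)ˣ) : ZMod q₁) * (b₁ : ZMod q₁)) *
        Tsum q₁ χ₂₁ (((e₁ * p.1 : (ZMod q₁)ˣ) : ZMod q₁) * (b₂ : ZMod q₁)) *
        Tsum q₁ χ₃₁ (((e₁ * p.1 : (ZMod q₁)ˣ) : ZMod q₁) * (b₃ : ZMod q₁)) *
        ZMod.stdAddChar (-(((e₁ * p.1 : (ZMod q₁)ˣ) : ZMod q₁) * (b₄ : ZMod q₁)))) *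
      (Tsum q₂ χ₁₂ (((e₂ * p.2 : (ZMod q₂)ˣ) : ZMod q₂) * (b₁ : ZMod q₂)) *
        Tsum q₂ χ₂₂ (((e₂ * p.2 : (ZMod q₂)ˣ) : ZMod q₂) * (b₂ : ZMod q₂)) *
        Tsum q₂ χ₃₂ (((e₂ * p.2 : (ZMod q₂)ˣ) : ZMod q₂) * (b₃ : ZMod q₂)) *
        ZMod.stdAddChar (-(((e₂ * p.2 : (ZMod q₂)ˣ) : ZMod q₂) * (b₄ : ZMod q₂)))))
  rw [step1]
  have step2 : (∑ w : (ZMod q₁)ˣ,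
      (Tsum q₁ χ₁₁ (((e₁ * w : (ZMod q₁)ˣ) : ZMod q₁) * (b₁ : ZMod q₁)) *
        Tsum q₁ χ₂₁ (((e₁ * w : (ZMod q₁)ˣ) : ZMod q₁) * (b₂ : ZMod q₁)) *
        Tsum q₁ χ₃₁ (((e₁ * w : (ZMod q₁)ˣ) : ZMod q₁) * (b₃ : ZMod q₁)) *
        ZMod.stdAddChar (-(((e₁ * w : (ZMod q₁)ˣ) : ZMod q₁) * (b₄ : ZMod q₁))))) *
      (∑ w : (ZMod q₂)ˣ,
      (Tsum q₂ χ₁₂ (((e₂ * w : (ZMod q₂)ˣ) : ZMod q₂) * (b₁ : ZMod q₂)) *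
        Tsum q₂ χ₂₂ (((e₂ * w : (ZMod q₂)ˣ) : ZMod q₂) * (b₂ : ZMod q₂)) *
        Tsum q₂ χ₃₂ (((e₂ * w : (ZMod q₂)ˣ) : ZMod q₂) * (b₃ : ZMod q₂)) *
        ZMod.stdAddChar (-(((e₂ * w : (ZMod q₂)ˣ) : ZMod q₂) * (b₄ : ZMod q₂)))))
      = ∑ p : (ZMod q₁)ˣ × (ZMod q₂)ˣ,
      (Tsum q₁ χ₁₁ (((e₁ * p.1 : (ZMod q₁)ˣ) : ZMod q₁) * (b₁ : ZMod q₁)) *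
        Tsum q₁ χ₂₁ (((e₁ * p.1 : (ZMod q₁)ˣ) : ZMod q₁) * (b₂ : ZMod q₁)) *
        Tsum q₁ χ₃₁ (((e₁ * p.1 : (ZMod q₁)ˣ) : ZMod q₁) * (b₃ : ZMod q₁)) *
        ZMod.stdAddChar (-(((e₁ * p.1 : (ZMod q₁)ˣ) : ZMod q₁) * (b₄ : ZMod q₁)))) *
      (Tsum q₂ χ₁₂ (((e₂ * p.2 : (ZMod q₂)ˣ) : ZMod q₂) * (b₁ : ZMod q₂)) *
        Tsum q₂ χ₂₂ (((e₂ * p.2 : (ZMod q₂)ˣ) : ZMod q₂) * (b₂ : ZMod q₂)) *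
        Tsum q₂ χ₃₂ (((e₂ * p.2 : (ZMod q₂)ˣ) : ZMod q₂) * (b₃ : ZMod q₂)) *
        ZMod.stdAddChar (-(((e₂ * p.2 : (ZMod q₂)ˣ) : ZMod q₂) * (b₄ : ZMod q₂)))) := by
    rw [Finset.sum_mul_sum]
    exact (Fintype.sum_prod_type (f := fun p : (ZMod q₁)ˣ × (ZMod q₂)ˣ =>
      (Tsum q₁ χ₁₁ (((e₁ * p.1 : (ZMod q₁)ˣ) : ZMod q₁) * (b₁ : ZMod q₁)) *
        Tsum q₁ χ₂₁ (((e₁ * p.1 : (ZMod q₁)ˣ) : ZMod q₁) * (b₂ : ZMod q₁)) *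
        Tsum q₁ χ₃₁ (((e₁ * p.1 : (ZMod q₁)ˣ) : ZMod q₁) * (b₃ : ZMod q₁)) *
        ZMod.stdAddChar (-(((e₁ * p.1 : (ZMod q₁)ˣ) : ZMod q₁) * (b₄ : ZMod q₁)))) *
      (Tsum q₂ χ₁₂ (((e₂ * p.2 : (ZMod q₂)ˣ) : ZMod q₂) * (b₁ : ZMod q₂)) *
        Tsum q₂ χ₂₂ (((e₂ * p.2 : (ZMod q₂)ˣ) : ZMod q₂) * (b₂ : ZMod q₂)) *
        Tsum q₂ χ₃₂ (((e₂ * p.2 : (ZMod q₂)ˣ) : ZMod q₂) * (b₃ : ZMod q₂)) *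
        ZMod.stdAddChar (-(((e₂ * p.2 : (ZMod q₂)ˣ) : ZMod q₂) * (b₄ : ZMod q₂)))))).symm
  rw [← step2]
  congr 1
  · exact Equiv.sum_comp (Equiv.mulLeft e₁) (g := fun w : (ZMod q₁)ˣ =>
      Tsum q₁ χ₁₁ ((w : ZMod q₁) * (b₁ : ZMod q₁)) *
        Tsum q₁ χ₂₁ ((w : ZMod q₁) * (b₂ : ZMod q₁)) *
        Tsum q₁ χ₃₁ ((w : ZMod q₁) * (b₃ : ZMod q₁)) *
        ZMod.stdAddChar (-((w : ZMod q₁) * (b₄ : ZMod q₁))))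
  · exact Equiv.sum_comp (Equiv.mulLeft e₂) (g := fun w : (ZMod q₂)ˣ =>
      Tsum q₂ χ₁₂ ((w : ZMod q₂) * (b₁ : ZMod q₂)) *
        Tsum q₂ χ₂₂ ((w : ZMod q₂) * (b₂ : ZMod q₂)) *
        Tsum q₂ χ₃₂ ((w : ZMod q₂) * (b₃ : ZMod q₂)) *
        ZMod.stdAddChar (-((w : ZMod q₂) * (b₄ : ZMod q₂))))


/-- Multiplicativity of `B`: if q = q₁q₂ with gcd(q₁,q₂) = 1 and each χ_j is the product of
characters χ_{j,1} mod q₁ and χ_{j,2} mod q₂, then B factors accordingly. -/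
theorem Bsum_multiplicative (q₁ q₂ : ℕ) (hq₁ : 0 < q₁) (hq₂ : 0 < q₂)
    (hco : Nat.Coprime q₁ q₂) (b₁ b₂ b₃ b₄ : ℤ)
    (χ₁₁ χ₂₁ χ₃₁ : DirichletCharacter ℂ q₁) (χ₁₂ χ₂₂ χ₃₂ : DirichletCharacter ℂ q₂) :
    Bsum (q₁ * q₂) b₁ b₂ b₃ b₄
      (DirichletCharacter.changeLevel (dvd_mul_right q₁ q₂) χ₁₁ *
        DirichletCharacter.changeLevel (dvd_mul_left q₂ q₁) χ₁₂)
      (DirichletCharacter.changeLevel (dvd_mul_right q₁ q₂) χ₂₁ *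
        DirichletCharacter.changeLevel (dvd_mul_left q₂ q₁) χ₂₂)
      (DirichletCharacter.changeLevel (dvd_mul_right q₁ q₂) χ₃₁ *
        DirichletCharacter.changeLevel (dvd_mul_left q₂ q₁) χ₃₂)
      = Bsum q₁ b₁ b₂ b₃ b₄ χ₁₁ χ₂₁ χ₃₁ * Bsum q₂ b₁ b₂ b₃ b₄ χ₁₂ χ₂₂ χ₃₂ := by
  haveI : NeZero q₁ := ⟨hq₁.ne'⟩
  haveI : NeZero q₂ := ⟨hq₂.ne'⟩
  haveI : NeZero (q₁ * q₂) := ⟨mul_ne_zero (NeZero.ne q₁) (NeZero.ne q₂)⟩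
  rw [Bsum_eq, Bsum_eq, Bsum_eq,
    Baux_mul q₁ q₂ hco b₁ b₂ b₃ b₄ χ₁₁ χ₂₁ χ₃₁ χ₁₂ χ₂₂ χ₃₂]
  have htot : ((q₁ * q₂).totient : ℂ) = (q₁.totient : ℂ) * (q₂.totient : ℂ) := by
    rw [Nat.totient_mul hco]
    push_cast
    ring
  rw [htot]
  ring
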